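/- Let G be a one-sided POSG, Γ a nonempty convex set of linear functions on Δ(S) such that V(b) = sup_{α ∈ Γ} α(b) is finite for every b ∈ Δ(S), and b ∈ Δ(S). Then sup_{π1 ∈ Π1} sup_{ᾱ ∈ Γ^{A1×O}} valcomp(π1, ᾱ)(b) = sup_{π1 ∈ Π1} inf_{π2 ∈ Π2} u^{V,b}(π1, π2). -/

import Mathlib

open scoped BigOperators

noncomputable section

/-- ℓ1 distance on `S → ℝ`. -/
def l1dist {S : Type*} [Fintype S] (p q : S → ℝ) : ℝ := ∑ s, |p s - q s|

/-- Evaluation at a belief `b` of the linear function on the simplex with vertex values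
`α : S → ℝ`. -/
def lineval {S : Type*} [Fintype S] (α : S → ℝ) (b : S → ℝ) : ℝ := ∑ s, b s * α s

/-- `f` is `k`-Lipschitz with respect to the ℓ1 metric on the probability simplex. -/
def LipOnSimplex {S : Type*} [Fintype S] (k : ℝ) (f : (S → ℝ) → ℝ) : Prop :=
  ∀ p ∈ stdSimplex ℝ S, ∀ q ∈ stdSimplex ℝ S, |f p - f q| ≤ k * l1dist p q

/-- A one-sided partially observable stochastic game. -/
structure OSPOSG (S A1 A2 O : Type*) [Fintype S] [Fintype A1] [Fintype A2] [Fintype O] where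
  /-- transition function: `T s a1 a2 o s'` is the probability of observing `o` and moving
  to `s'` from `s` under actions `a1, a2`. -/
  T : S → A1 → A2 → O → S → ℝ
  T_nonneg : ∀ s a1 a2 o s', 0 ≤ T s a1 a2 o s'
  T_sum : ∀ s a1 a2, ∑ o, ∑ s', T s a1 a2 o s' = 1
  /-- reward function of player 1 -/
  R : S → A1 → A2 → ℝ
  /-- discount factor -/
  γ : ℝ
  γ_pos : 0 < γ
  γ_lt_one : γ < 1

namespace OSPOSG

variable {S A1 A2 O : Type*} [Fintype S] [Fintype A1] [Fintype A2] [Fintype O]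
  [Nonempty S] [Nonempty A1] [Nonempty A2] [Nonempty O]

/-- The minimum reward `r_min`. -/
def rmin (G : OSPOSG S A1 A2 O) : ℝ :=
  Finset.univ.inf' Finset.univ_nonempty fun x : S × A1 × A2 => G.R x.1 x.2.1 x.2.2

/-- The maximum reward `r_max`. -/
def rmax (G : OSPOSG S A1 A2 O) : ℝ :=
  Finset.univ.sup' Finset.univ_nonempty fun x : S × A1 × A2 => G.R x.1 x.2.1 x.2.2

/-- `L = r_min / (1 - γ)`. -/
def Lval (G : OSPOSG S A1 A2 O) : ℝ := G.rmin / (1 - G.γ)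

/-- `U = r_max / (1 - γ)`. -/
def Uval (G : OSPOSG S A1 A2 O) : ℝ := G.rmax / (1 - G.γ)

/-- `δ = (U - L) / 2`. -/
def δval (G : OSPOSG S A1 A2 O) : ℝ := (G.Uval - G.Lval) / 2

/-- The set of stage strategies of player 2. -/
def Pi2 (S A2 : Type*) [Fintype A2] : Set (S → A2 → ℝ) :=
  {π2 | ∀ s, π2 s ∈ stdSimplex ℝ A2}

/-- Vertex values of the value composition `valcomp(π1, ᾱ)`. -/
def valcompVert (G : OSPOSG S A1 A2 O) (π1 : A1 → ℝ) (αb : A1 → O → S → ℝ) (s : S) : ℝ :=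
  Finset.univ.inf' Finset.univ_nonempty fun a2 =>
    ∑ a1, π1 a1 * (G.R s a1 a2 + G.γ * ∑ o, ∑ s', G.T s a1 a2 o s' * αb a1 o s')

/-- The value composition `valcomp(π1, ᾱ)`, a linear function of the belief `b`. -/
def valcomp (G : OSPOSG S A1 A2 O) (π1 : A1 → ℝ) (αb : A1 → O → S → ℝ) (b : S → ℝ) : ℝ :=
  ∑ s, b s * G.valcompVert π1 αb s

/-- `Pr_{b,π1,π2}[a1, o]`: the probability that player 1 plays `a1` and observes `o`. -/
def Pr (G : OSPOSG S A1 A2 O) (b : S → ℝ) (π1 : A1 → ℝ) (π2 : S → A2 → ℝ)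
    (a1 : A1) (o : O) : ℝ :=
  ∑ s, ∑ a2, ∑ s', b s * π1 a1 * π2 s a2 * G.T s a1 a2 o s'

/-- The updated belief `τ(b, a1, π2, o)` of player 1 (junk value `0` if the normalizing
constant vanishes; such terms are always multiplied by a zero probability below). -/
def beliefUpd (G : OSPOSG S A1 A2 O) (b : S → ℝ) (a1 : A1) (π2 : S → A2 → ℝ) (o : O) :
    S → ℝ := fun s' =>
  (∑ s, ∑ a2, b s * π2 s a2 * G.T s a1 a2 o s') /
    (∑ s'', ∑ s, ∑ a2, b s * π2 s a2 * G.T s a1 a2 o s'')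

/-- The stage utility `u^{V,b}(π1, π2)`. -/
def stageU (G : OSPOSG S A1 A2 O) (V : (S → ℝ) → ℝ) (b : S → ℝ)
    (π1 : A1 → ℝ) (π2 : S → A2 → ℝ) : ℝ :=
  (∑ s, ∑ a1, ∑ a2, b s * π1 a1 * π2 s a2 * G.R s a1 a2) +
    G.γ * ∑ a1, ∑ o, G.Pr b π1 π2 a1 o * V (G.beliefUpd b a1 π2 o)

/-- The minimax (Bellman) operator `[HV](b) = sup_{π1} inf_{π2} u^{V,b}(π1,π2)`. -/
def Hop (G : OSPOSG S A1 A2 O) (V : (S → ℝ) → ℝ) (b : S → ℝ) : ℝ :=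
  ⨆ π1 : stdSimplex ℝ A1, ⨅ π2 : Pi2 S A2, G.stageU V b π1.1 π2.1

end OSPOSG


open Finset in
theorem minimax_sep {E ι : Type*} [Fintype ι] [Nonempty ι] [AddCommGroup E] [Module ℝ E]
    (Y : Set E) (hYne : Y.Nonempty) (hYconv : Convex ℝ Y) (ψ : ι → E → ℝ)
    (hψ : ∀ i, ∀ x ∈ Y, ∀ y ∈ Y, ∀ a b : ℝ, 0 ≤ a → 0 ≤ b → a + b = 1 →
      ψ i (a • x + b • y) = a * ψ i x + b * ψ i y)
    (c : ℝ) (hc : ∀ y ∈ Y, ∃ i, ψ i y ≤ c) :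
    ∃ lam : ι → ℝ, lam ∈ stdSimplex ℝ ι ∧ ∀ y ∈ Y, ∑ i, lam i * ψ i y ≤ c := by
  classical
  set C : Set (ι → ℝ) := {x | ∃ y ∈ Y, ∀ i, x i ≤ ψ i y} with hC
  set Op : Set (ι → ℝ) := {x | ∀ i, c < x i} with hOp
  have hCconv : Convex ℝ C := by
    rintro x ⟨y, hy, hxy⟩ z ⟨w, hw, hzw⟩ a b ha hb hab
    refine ⟨a • y + b • w, hYconv hy hw ha hb hab, fun i => ?_⟩
    rw [hψ i y hy w hw a b ha hb hab]
    have := add_le_add (mul_le_mul_of_nonneg_left (hxy i) ha)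
      (mul_le_mul_of_nonneg_left (hzw i) hb)
    simpa using this
  have hOconv : Convex ℝ Op := by
    rintro x hx z hz a b ha hb hab
    intro i
    have h1 : a * c ≤ a * x i := mul_le_mul_of_nonneg_left (hx i).le ha
    have h2 : b * c ≤ b * z i := mul_le_mul_of_nonneg_left (hz i).le hb
    have key : a * c + b * c < a * x i + b * z i := by
      rcases lt_or_eq_of_le ha with h | h
      · exact add_lt_add_of_lt_of_le (mul_lt_mul_of_pos_left (hx i) h) h2
      · have hb1 : 0 < b := by rw [← h] at hab; linarith
        exact add_lt_add_of_le_of_lt h1 (mul_lt_mul_of_pos_left (hz i) hb1)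
    have hcc : c = a * c + b * c := by rw [← add_mul, hab, one_mul]
    calc c = a * c + b * c := hcc
      _ < a * x i + b * z i := key
      _ = (a • x + b • z) i := by simp
  have hOopen : IsOpen Op := by
    have : Op = ⋂ i, (fun x : ι → ℝ => x i) ⁻¹' Set.Ioi c := by
      ext x; simp [hOp, Set.mem_iInter]
    rw [this]
    exact isOpen_iInter_of_finite fun i => (continuous_apply i).isOpen_preimage _ isOpen_Ioi
  have hdisj : Disjoint Op C := by
    rw [Set.disjoint_left]
    rintro x hx ⟨y, hy, hxy⟩
    obtain ⟨i, hi⟩ := hc y hy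
    exact absurd ((hx i).trans_le (hxy i)) (not_lt.2 hi)
  obtain ⟨y0, hy0⟩ := hYne
  obtain ⟨f, u, hfO, hfC⟩ := geometric_hahn_banach_open hOconv hOopen hCconv hdisj
  set μ : ι → ℝ := fun i => f (fun j => if i = j then (1:ℝ) else 0) with hμdef
  have hf : ∀ x : ι → ℝ, f x = ∑ i, x i * μ i := by
    intro x
    conv_lhs => rw [pi_eq_sum_univ x, map_sum]
    refine Finset.sum_congr rfl fun i _ => ?_
    rw [map_smul, smul_eq_mul]
  have hmem : ∀ y ∈ Y, (fun i => ψ i y) ∈ C := fun y hy => ⟨y, hy, fun i => le_rfl⟩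
  have hμ : ∀ i, μ i ≤ 0 := by
    intro i
    by_contra hpos
    push_neg at hpos
    have hu0 : u ≤ f (fun j => ψ j y0) := hfC _ (hmem y0 hy0)
    set t : ℝ := (f (fun j => ψ j y0) - u + 1) / μ i with ht
    have htpos : 0 < t := div_pos (by linarith) hpos
    have hC2 : ((fun j => ψ j y0) - t • (fun j => if i = j then (1:ℝ) else 0)) ∈ C := by
      refine ⟨y0, hy0, fun j => ?_⟩
      simp only [Pi.sub_apply, Pi.smul_apply, smul_eq_mul]
      have : 0 ≤ t * (if i = j then (1:ℝ) else 0) := by positivity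
      linarith
    have := hfC _ hC2
    rw [map_sub, map_smul, smul_eq_mul] at this
    rw [ht] at this
    rw [div_mul_cancel₀ _ (ne_of_gt hpos)] at this
    linarith
  have hMle : ∑ i, μ i ≤ 0 := Finset.sum_nonpos fun i _ => hμ i
  have hOpt : ∀ t : ℝ, 0 < t → (c + t) * ∑ i, μ i < u := by
    intro t ht
    have hmem2 : (fun _ : ι => c + t) ∈ Op := fun i => show c < c + t by linarith
    have := hfO _ hmem2
    rw [hf] at this
    rwa [← Finset.mul_sum] at this
  have hM : ∑ i, μ i < 0 := by
    rcases lt_or_eq_of_le hMle with h | h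
    · exact h
    · exfalso
      have hall : ∀ i ∈ Finset.univ, μ i = 0 := by
        intro i _
        have := (Finset.sum_eq_zero_iff_of_nonpos (fun i _ => hμ i)).1 h i (Finset.mem_univ i)
        exact this
      have hf0 : ∀ x : ι → ℝ, f x = 0 := by
        intro x; rw [hf]
        exact Finset.sum_eq_zero fun i _ => by rw [hall i (Finset.mem_univ i), mul_zero]
      have h1 : (0:ℝ) < u := by have := hOpt 1 one_pos; rwa [h, mul_zero] at this
      have h2 : u ≤ 0 := by have := hfC _ (hmem y0 hy0); rwa [hf0] at this
      linarith
  refine ⟨fun i => μ i / (∑ j, μ j), ⟨fun i => div_nonneg_of_nonpos (hμ i) hMle,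
    by rw [← Finset.sum_div, div_self (ne_of_lt hM)]⟩, ?_⟩
  intro y hy
  have h1 : u ≤ ∑ i, ψ i y * μ i := by
    have := hfC _ (hmem y hy)
    rwa [hf] at this
  have hlam : ∑ i, μ i / (∑ j, μ j) * ψ i y = (∑ i, ψ i y * μ i) / (∑ j, μ j) := by
    rw [Finset.sum_div]
    exact Finset.sum_congr rfl fun i _ => by ring
  rw [hlam]
  have h2 : (∑ i, ψ i y * μ i) / (∑ j, μ j) ≤ u / (∑ j, μ j) :=
    (div_le_div_right_of_neg hM).2 h1
  refine h2.trans ?_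
  refine le_of_forall_sub_le fun ε hε => ?_
  have := hOpt ε hε
  have := (div_lt_iff_of_neg hM).2 this
  linarith


namespace OSPOSG

variable {S A1 A2 O : Type*} [Fintype S] [Fintype A1] [Fintype A2] [Fintype O]
  [Nonempty S] [Nonempty A1] [Nonempty A2] [Nonempty O]

variable {G : OSPOSG S A1 A2 O} {b : S → ℝ} {π1 : A1 → ℝ} {π2 : S → A2 → ℝ}
  {a1 : A1} {o : O}

set_option linter.unusedSectionVars false

-- ### auxiliary definitions
def gfun (G : OSPOSG S A1 A2 O) (π1 : A1 → ℝ) (αb : A1 → O → S → ℝ) (s : S) (a2 : A2) : ℝ :=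
  ∑ a1, π1 a1 * (G.R s a1 a2 + G.γ * ∑ o, ∑ s', G.T s a1 a2 o s' * αb a1 o s')

def Nfun (G : OSPOSG S A1 A2 O) (b : S → ℝ) (π2 : S → A2 → ℝ) (a1 : A1) (o : O) (s' : S) : ℝ :=
  ∑ s, ∑ a2, b s * π2 s a2 * G.T s a1 a2 o s'

def Dfun (G : OSPOSG S A1 A2 O) (b : S → ℝ) (π2 : S → A2 → ℝ) (a1 : A1) (o : O) : ℝ :=
  ∑ s, ∑ a2, ∑ s', b s * π2 s a2 * G.T s a1 a2 o s'

def Xfun (G : OSPOSG S A1 A2 O) (b : S → ℝ) (π2 : S → A2 → ℝ) (a1 : A1) (o : O)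
    (α : S → ℝ) : ℝ :=
  ∑ s, ∑ a2, ∑ s', b s * π2 s a2 * G.T s a1 a2 o s' * α s'

variable {G : OSPOSG S A1 A2 O} {b : S → ℝ} {π1 : A1 → ℝ} {π2 : S → A2 → ℝ}
  {a1 : A1} {o : O}

lemma valcompVert_eq (αb : A1 → O → S → ℝ) (s : S) :
    G.valcompVert π1 αb s = Finset.univ.inf' Finset.univ_nonempty (G.gfun π1 αb s) := rfl

lemma Pr_eq : G.Pr b π1 π2 a1 o = π1 a1 * G.Dfun b π2 a1 o := by
  unfold Pr Dfun
  simp only [Finset.mul_sum]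
  exact Finset.sum_congr rfl fun s _ => Finset.sum_congr rfl fun a2 _ =>
    Finset.sum_congr rfl fun s' _ => by ring

lemma Dfun_eq_sum_Nfun : G.Dfun b π2 a1 o = ∑ s', G.Nfun b π2 a1 o s' := by
  unfold Dfun Nfun
  calc (∑ s, ∑ a2, ∑ s', b s * π2 s a2 * G.T s a1 a2 o s')
      = ∑ s, ∑ s', ∑ a2, b s * π2 s a2 * G.T s a1 a2 o s' :=
        Finset.sum_congr rfl fun s _ => Finset.sum_comm
    _ = ∑ s', ∑ s, ∑ a2, b s * π2 s a2 * G.T s a1 a2 o s' := Finset.sum_comm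

lemma Dfun_eq_denom :
    (∑ s'', ∑ s, ∑ a2, b s * π2 s a2 * G.T s a1 a2 o s'') = G.Dfun b π2 a1 o := by
  rw [Dfun_eq_sum_Nfun]
  exact Finset.sum_congr rfl fun s'' _ => rfl

lemma beliefUpd_apply (s' : S) :
    G.beliefUpd b a1 π2 o s' = G.Nfun b π2 a1 o s' / G.Dfun b π2 a1 o := by
  unfold beliefUpd Nfun
  rw [Dfun_eq_denom]

lemma Nfun_nonneg (hb : b ∈ stdSimplex ℝ S) (hπ2 : π2 ∈ Pi2 S A2) (s' : S) :
    0 ≤ G.Nfun b π2 a1 o s' :=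
  Finset.sum_nonneg fun s _ => Finset.sum_nonneg fun a2 _ =>
    mul_nonneg (mul_nonneg (hb.1 s) ((hπ2 s).1 a2)) (G.T_nonneg s a1 a2 o s')

lemma Dfun_nonneg (hb : b ∈ stdSimplex ℝ S) (hπ2 : π2 ∈ Pi2 S A2) :
    0 ≤ G.Dfun b π2 a1 o := by
  rw [Dfun_eq_sum_Nfun]
  exact Finset.sum_nonneg fun s' _ => Nfun_nonneg hb hπ2 s'

lemma Xfun_eq (α : S → ℝ) :
    G.Xfun b π2 a1 o α = ∑ s', G.Nfun b π2 a1 o s' * α s' := by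
  unfold Xfun Nfun
  calc (∑ s, ∑ a2, ∑ s', b s * π2 s a2 * G.T s a1 a2 o s' * α s')
      = ∑ s, ∑ s', ∑ a2, b s * π2 s a2 * G.T s a1 a2 o s' * α s' :=
        Finset.sum_congr rfl fun s _ => Finset.sum_comm
    _ = ∑ s', ∑ s, ∑ a2, b s * π2 s a2 * G.T s a1 a2 o s' * α s' := Finset.sum_comm
    _ = ∑ s', (∑ s, ∑ a2, b s * π2 s a2 * G.T s a1 a2 o s') * α s' := by
        refine Finset.sum_congr rfl fun s' _ => ?_
        rw [Finset.sum_mul]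
        exact Finset.sum_congr rfl fun s _ => (Finset.sum_mul _ _ _).symm

lemma Xfun_zero (hb : b ∈ stdSimplex ℝ S) (hπ2 : π2 ∈ Pi2 S A2)
    (hD : G.Dfun b π2 a1 o = 0) (α : S → ℝ) : G.Xfun b π2 a1 o α = 0 := by
  have hterm : ∀ s ∈ Finset.univ, (∑ a2, ∑ s', b s * π2 s a2 * G.T s a1 a2 o s' : ℝ) = 0 := by
    rw [← Finset.sum_eq_zero_iff_of_nonneg]
    · exact hD
    · intro s _
      exact Finset.sum_nonneg fun a2 _ => Finset.sum_nonneg fun s' _ =>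
        mul_nonneg (mul_nonneg (hb.1 s) ((hπ2 s).1 a2)) (G.T_nonneg s a1 a2 o s')
  unfold Xfun
  refine Finset.sum_eq_zero fun s _ => ?_
  have h2 : ∀ a2 ∈ Finset.univ, (∑ s', b s * π2 s a2 * G.T s a1 a2 o s' : ℝ) = 0 := by
    rw [← Finset.sum_eq_zero_iff_of_nonneg]
    · exact hterm s (Finset.mem_univ s)
    · intro a2 _
      exact Finset.sum_nonneg fun s' _ =>
        mul_nonneg (mul_nonneg (hb.1 s) ((hπ2 s).1 a2)) (G.T_nonneg s a1 a2 o s')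
  refine Finset.sum_eq_zero fun a2 _ => ?_
  have h3 : ∀ s' ∈ Finset.univ, (b s * π2 s a2 * G.T s a1 a2 o s' : ℝ) = 0 := by
    rw [← Finset.sum_eq_zero_iff_of_nonneg]
    · exact h2 a2 (Finset.mem_univ a2)
    · intro s' _
      exact mul_nonneg (mul_nonneg (hb.1 s) ((hπ2 s).1 a2)) (G.T_nonneg s a1 a2 o s')
  refine Finset.sum_eq_zero fun s' _ => ?_
  rw [h3 s' (Finset.mem_univ s'), zero_mul]

lemma beliefUpd_mem (hb : b ∈ stdSimplex ℝ S) (hπ2 : π2 ∈ Pi2 S A2)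
    (hD : 0 < G.Dfun b π2 a1 o) : G.beliefUpd b a1 π2 o ∈ stdSimplex ℝ S := by
  constructor
  · intro s'
    rw [beliefUpd_apply]
    exact div_nonneg (Nfun_nonneg hb hπ2 s') hD.le
  · have : ∑ s', G.beliefUpd b a1 π2 o s' = ∑ s', G.Nfun b π2 a1 o s' / G.Dfun b π2 a1 o :=
      Finset.sum_congr rfl fun s' _ => beliefUpd_apply s'
    rw [this, ← Finset.sum_div, ← Dfun_eq_sum_Nfun, div_self (ne_of_gt hD)]

lemma lineval_beliefUpd (hD : G.Dfun b π2 a1 o ≠ 0) (α : S → ℝ) :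
    G.Dfun b π2 a1 o * lineval α (G.beliefUpd b a1 π2 o) = G.Xfun b π2 a1 o α := by
  unfold lineval
  rw [Finset.mul_sum, Xfun_eq]
  refine Finset.sum_congr rfl fun s' _ => ?_
  rw [beliefUpd_apply]
  field_simp

lemma Phi_eq (αb : A1 → O → S → ℝ) :
    ∑ s, b s * ∑ a2, π2 s a2 * G.gfun π1 αb s a2
      = (∑ s, ∑ a1, ∑ a2, b s * π1 a1 * π2 s a2 * G.R s a1 a2)
        + G.γ * ∑ a1, ∑ o, π1 a1 * G.Xfun b π2 a1 o (αb a1 o) := by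
  have key : ∀ s, b s * ∑ a2, π2 s a2 * G.gfun π1 αb s a2
      = ∑ a1, ∑ a2, (b s * π1 a1 * π2 s a2 * G.R s a1 a2
        + G.γ * (π1 a1 * ∑ o, ∑ s', b s * π2 s a2 * G.T s a1 a2 o s' * αb a1 o s')) := by
    intro s
    unfold gfun
    rw [Finset.mul_sum]
    calc (∑ a2, b s * (π2 s a2 * ∑ a1, π1 a1 *
            (G.R s a1 a2 + G.γ * ∑ o, ∑ s', G.T s a1 a2 o s' * αb a1 o s')))
        = ∑ a2, ∑ a1, b s * (π2 s a2 * (π1 a1 *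
            (G.R s a1 a2 + G.γ * ∑ o, ∑ s', G.T s a1 a2 o s' * αb a1 o s'))) := by
          refine Finset.sum_congr rfl fun a2 _ => ?_
          rw [Finset.mul_sum, Finset.mul_sum]
      _ = ∑ a1, ∑ a2, b s * (π2 s a2 * (π1 a1 *
            (G.R s a1 a2 + G.γ * ∑ o, ∑ s', G.T s a1 a2 o s' * αb a1 o s'))) := Finset.sum_comm
      _ = ∑ a1, ∑ a2, (b s * π1 a1 * π2 s a2 * G.R s a1 a2
            + G.γ * (π1 a1 * ∑ o, ∑ s', b s * π2 s a2 * G.T s a1 a2 o s' * αb a1 o s')) := by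
          refine Finset.sum_congr rfl fun a1 _ => Finset.sum_congr rfl fun a2 _ => ?_
          have hQ : (∑ o, ∑ s', b s * π2 s a2 * G.T s a1 a2 o s' * αb a1 o s')
              = b s * π2 s a2 * ∑ o, ∑ s', G.T s a1 a2 o s' * αb a1 o s' := by
            rw [Finset.mul_sum]
            refine Finset.sum_congr rfl fun o _ => ?_
            rw [Finset.mul_sum]
            exact Finset.sum_congr rfl fun s' _ => by ring
          rw [hQ]
          ring
  calc (∑ s, b s * ∑ a2, π2 s a2 * G.gfun π1 αb s a2)
      = ∑ s, ∑ a1, ∑ a2, (b s * π1 a1 * π2 s a2 * G.R s a1 a2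
          + G.γ * (π1 a1 * ∑ o, ∑ s', b s * π2 s a2 * G.T s a1 a2 o s' * αb a1 o s')) :=
        Finset.sum_congr rfl fun s _ => key s
    _ = (∑ s, ∑ a1, ∑ a2, b s * π1 a1 * π2 s a2 * G.R s a1 a2)
          + ∑ s, ∑ a1, ∑ a2, G.γ * (π1 a1 * ∑ o, ∑ s', b s * π2 s a2 * G.T s a1 a2 o s' * αb a1 o s') := by
        simp only [Finset.sum_add_distrib]
    _ = (∑ s, ∑ a1, ∑ a2, b s * π1 a1 * π2 s a2 * G.R s a1 a2)
          + G.γ * ∑ a1, ∑ o, π1 a1 * G.Xfun b π2 a1 o (αb a1 o) := by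
        congr 1
        simp only [Xfun, Finset.mul_sum]
        calc (∑ s, ∑ a1, ∑ a2, ∑ o, ∑ s', G.γ * (π1 a1 * (b s * π2 s a2 * G.T s a1 a2 o s' * αb a1 o s')))
            = ∑ a1, ∑ s, ∑ a2, ∑ o, ∑ s', G.γ * (π1 a1 * (b s * π2 s a2 * G.T s a1 a2 o s' * αb a1 o s')) :=
              Finset.sum_comm
          _ = ∑ a1, ∑ s, ∑ o, ∑ a2, ∑ s', G.γ * (π1 a1 * (b s * π2 s a2 * G.T s a1 a2 o s' * αb a1 o s')) :=
              Finset.sum_congr rfl fun a1 _ => Finset.sum_congr rfl fun s _ => Finset.sum_comm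
          _ = ∑ a1, ∑ o, ∑ s, ∑ a2, ∑ s', G.γ * (π1 a1 * (b s * π2 s a2 * G.T s a1 a2 o s' * αb a1 o s')) :=
              Finset.sum_congr rfl fun a1 _ => Finset.sum_comm
lemma lemP (hb : b ∈ stdSimplex ℝ S) (hπ1 : π1 ∈ stdSimplex ℝ A1) (hπ2 : π2 ∈ Pi2 S A2)
    {Γ : Set (S → ℝ)} (hbdd : ∀ β ∈ stdSimplex ℝ S, BddAbove ((fun α => lineval α β) '' Γ))
    {V : (S → ℝ) → ℝ} (hV : ∀ β ∈ stdSimplex ℝ S, V β = sSup ((fun α => lineval α β) '' Γ))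
    {α : S → ℝ} (hα : α ∈ Γ) :
    π1 a1 * G.Xfun b π2 a1 o α ≤ G.Pr b π1 π2 a1 o * V (G.beliefUpd b a1 π2 o) := by
  rcases eq_or_lt_of_le (Dfun_nonneg (G := G) (a1 := a1) (o := o) hb hπ2) with hD | hD
  · rw [Xfun_zero hb hπ2 hD.symm, Pr_eq, ← hD]
    simp
  · have hτ := beliefUpd_mem (G := G) (a1 := a1) (o := o) hb hπ2 hD
    have h1 : lineval α (G.beliefUpd b a1 π2 o) ≤ V (G.beliefUpd b a1 π2 o) := by
      rw [hV _ hτ]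
      exact le_csSup (hbdd _ hτ) ⟨α, hα, rfl⟩
    have h2 : G.Xfun b π2 a1 o α = G.Dfun b π2 a1 o * lineval α (G.beliefUpd b a1 π2 o) :=
      (lineval_beliefUpd (ne_of_gt hD) α).symm
    rw [Pr_eq, h2, ← mul_assoc]
    have hnn : 0 ≤ π1 a1 * G.Dfun b π2 a1 o := mul_nonneg (hπ1.1 a1) hD.le
    exact mul_le_mul_of_nonneg_left h1 hnn

lemma lemQ (hb : b ∈ stdSimplex ℝ S) (hπ1 : π1 ∈ stdSimplex ℝ A1) (hπ2 : π2 ∈ Pi2 S A2)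
    {Γ : Set (S → ℝ)} (hne : Γ.Nonempty)
    {V : (S → ℝ) → ℝ} (hV : ∀ β ∈ stdSimplex ℝ S, V β = sSup ((fun α => lineval α β) '' Γ))
    {ε : ℝ} (hε : 0 < ε) :
    ∃ α ∈ Γ, G.Pr b π1 π2 a1 o * V (G.beliefUpd b a1 π2 o) ≤ π1 a1 * G.Xfun b π2 a1 o α + ε := by
  rcases eq_or_lt_of_le (Dfun_nonneg (G := G) (a1 := a1) (o := o) hb hπ2) with hD | hD
  · obtain ⟨α0, hα0⟩ := hne
    refine ⟨α0, hα0, ?_⟩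
    rw [Xfun_zero hb hπ2 hD.symm, Pr_eq, ← hD]
    simpa using hε.le
  · have hτ := beliefUpd_mem (G := G) (a1 := a1) (o := o) hb hπ2 hD
    set c0 : ℝ := π1 a1 * G.Dfun b π2 a1 o with hc0
    have hc0nn : 0 ≤ c0 := mul_nonneg (hπ1.1 a1) hD.le
    set ε' : ℝ := ε / (c0 + 1) with hε'
    have hε'pos : 0 < ε' := div_pos hε (by linarith)
    have hVτ : V (G.beliefUpd b a1 π2 o) = sSup ((fun α => lineval α (G.beliefUpd b a1 π2 o)) '' Γ) :=
      hV _ hτ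
    have himgne : ((fun α => lineval α (G.beliefUpd b a1 π2 o)) '' Γ).Nonempty := hne.image _
    have hlt : V (G.beliefUpd b a1 π2 o) - ε' < sSup ((fun α => lineval α (G.beliefUpd b a1 π2 o)) '' Γ) := by
      rw [← hVτ]; linarith
    obtain ⟨y, ⟨α, hα, rfl⟩, hy⟩ := exists_lt_of_lt_csSup himgne hlt
    refine ⟨α, hα, ?_⟩
    rw [Pr_eq, ← hc0]
    have h2 : π1 a1 * G.Xfun b π2 a1 o α = c0 * lineval α (G.beliefUpd b a1 π2 o) := by
      rw [← lineval_beliefUpd (ne_of_gt hD) α, hc0]; ring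
    rw [h2]
    have hstep : c0 * V (G.beliefUpd b a1 π2 o) ≤ c0 * (lineval α (G.beliefUpd b a1 π2 o) + ε') :=
      mul_le_mul_of_nonneg_left (by linarith) hc0nn
    have hc0ε : c0 * ε' ≤ ε := by
      rw [hε', mul_div_assoc']
      rw [div_le_iff₀ (by linarith : (0:ℝ) < c0 + 1)]
      nlinarith
    calc c0 * V (G.beliefUpd b a1 π2 o) ≤ c0 * lineval α (G.beliefUpd b a1 π2 o) + c0 * ε' := by
          rw [← mul_add]; exact hstep
      _ ≤ c0 * lineval α (G.beliefUpd b a1 π2 o) + ε := by linarith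

lemma gfun_affine (x y : A1 → O → S → ℝ) {a c : ℝ} (hac : a + c = 1) (s : S) (a2 : A2) :
    G.gfun π1 (a • x + c • y) s a2 = a * G.gfun π1 x s a2 + c * G.gfun π1 y s a2 := by
  unfold gfun
  rw [Finset.mul_sum, Finset.mul_sum, ← Finset.sum_add_distrib]
  refine Finset.sum_congr rfl fun a1 _ => ?_
  have hsum : (∑ o, ∑ s', G.T s a1 a2 o s' * (a • x + c • y) a1 o s')
      = a * (∑ o, ∑ s', G.T s a1 a2 o s' * x a1 o s')
        + c * (∑ o, ∑ s', G.T s a1 a2 o s' * y a1 o s') := by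
    rw [Finset.mul_sum, Finset.mul_sum, ← Finset.sum_add_distrib]
    refine Finset.sum_congr rfl fun o _ => ?_
    rw [Finset.mul_sum, Finset.mul_sum, ← Finset.sum_add_distrib]
    refine Finset.sum_congr rfl fun s' _ => ?_
    simp only [Pi.add_apply, Pi.smul_apply, smul_eq_mul]
    ring
  rw [hsum]
  have h1 : G.R s a1 a2 = (a + c) * G.R s a1 a2 := by rw [hac, one_mul]
  calc π1 a1 * (G.R s a1 a2 + G.γ * (a * (∑ o, ∑ s', G.T s a1 a2 o s' * x a1 o s')
          + c * (∑ o, ∑ s', G.T s a1 a2 o s' * y a1 o s')))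
      = π1 a1 * ((a + c) * G.R s a1 a2 + G.γ * (a * (∑ o, ∑ s', G.T s a1 a2 o s' * x a1 o s')
          + c * (∑ o, ∑ s', G.T s a1 a2 o s' * y a1 o s'))) := by rw [← h1]
    _ = a * (π1 a1 * (G.R s a1 a2 + G.γ * ∑ o, ∑ s', G.T s a1 a2 o s' * x a1 o s'))
          + c * (π1 a1 * (G.R s a1 a2 + G.γ * ∑ o, ∑ s', G.T s a1 a2 o s' * y a1 o s')) := by
        ring

lemma valcomp_le_Phi (hb : b ∈ stdSimplex ℝ S) (hπ2 : π2 ∈ Pi2 S A2) (αb : A1 → O → S → ℝ) :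
    G.valcomp π1 αb b ≤ ∑ s, b s * ∑ a2, π2 s a2 * G.gfun π1 αb s a2 := by
  unfold valcomp
  refine Finset.sum_le_sum fun s _ => ?_
  refine mul_le_mul_of_nonneg_left ?_ (hb.1 s)
  rw [valcompVert_eq]
  have h1 : Finset.univ.inf' Finset.univ_nonempty (G.gfun π1 αb s)
      = ∑ a2, π2 s a2 * Finset.univ.inf' Finset.univ_nonempty (G.gfun π1 αb s) := by
    rw [← Finset.sum_mul, (hπ2 s).2, one_mul]
  rw [h1]
  refine Finset.sum_le_sum fun a2 _ => ?_
  exact mul_le_mul_of_nonneg_left (Finset.inf'_le _ (Finset.mem_univ a2)) ((hπ2 s).1 a2)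

lemma valcomp_le_stageU (hb : b ∈ stdSimplex ℝ S) (hπ1 : π1 ∈ stdSimplex ℝ A1)
    (hπ2 : π2 ∈ Pi2 S A2)
    {Γ : Set (S → ℝ)} (hbdd : ∀ β ∈ stdSimplex ℝ S, BddAbove ((fun α => lineval α β) '' Γ))
    {V : (S → ℝ) → ℝ} (hV : ∀ β ∈ stdSimplex ℝ S, V β = sSup ((fun α => lineval α β) '' Γ))
    {αb : A1 → O → S → ℝ} (hαb : ∀ a1 o, αb a1 o ∈ Γ) :
    G.valcomp π1 αb b ≤ G.stageU V b π1 π2 := by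
  refine (valcomp_le_Phi hb hπ2 αb).trans ?_
  rw [Phi_eq]
  unfold stageU
  refine add_le_add le_rfl ?_
  refine mul_le_mul_of_nonneg_left ?_ G.γ_pos.le
  refine Finset.sum_le_sum fun a1 _ => Finset.sum_le_sum fun o _ => ?_
  exact lemP hb hπ1 hπ2 hbdd hV (hαb a1 o)

lemma alpha_bound {Γ : Set (S → ℝ)}
    (hbdd : ∀ β ∈ stdSimplex ℝ S, BddAbove ((fun α => lineval α β) '' Γ)) :
    ∃ Cb : ℝ, ∀ α ∈ Γ, ∀ s, α s ≤ Cb := by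
  classical
  set δ : S → S → ℝ := fun s s'' => if s'' = s then (1:ℝ) else 0 with hδ
  have hδmem : ∀ s, δ s ∈ stdSimplex ℝ S := by
    intro s
    constructor
    · intro s''; by_cases h : s'' = s <;> simp [hδ, h]
    · simp [hδ]
  have hδeval : ∀ (α : S → ℝ) s, lineval α (δ s) = α s := by
    intro α s
    unfold lineval
    simp [hδ, ite_mul, Finset.sum_ite_eq']
  refine ⟨Finset.univ.sup' Finset.univ_nonempty
    (fun s => sSup ((fun α => lineval α (δ s)) '' Γ)), ?_⟩
  intro α hα s
  have h1 : α s ≤ sSup ((fun α => lineval α (δ s)) '' Γ) := by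
    rw [← hδeval α s]
    exact le_csSup (hbdd _ (hδmem s)) ⟨α, hα, rfl⟩
  exact h1.trans (Finset.le_sup' (fun s => sSup ((fun α => lineval α (δ s)) '' Γ)) (Finset.mem_univ s))

lemma valcomp_bound (hb : b ∈ stdSimplex ℝ S) (hπ1 : π1 ∈ stdSimplex ℝ A1)
    {Cb : ℝ} {αb : A1 → O → S → ℝ} (hCb : ∀ a1 o s', αb a1 o s' ≤ max Cb 0) :
    G.valcomp π1 αb b ≤ G.rmax + G.γ * max Cb 0 := by
  set C : ℝ := max Cb 0 with hC
  have hC0 : 0 ≤ C := le_max_right _ _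
  set a20 : A2 := Classical.arbitrary A2
  have hg : ∀ s, G.gfun π1 αb s a20 ≤ G.rmax + G.γ * C := by
    intro s
    unfold gfun
    have hterm : ∀ a1 ∈ Finset.univ, π1 a1 * (G.R s a1 a20
        + G.γ * ∑ o, ∑ s', G.T s a1 a20 o s' * αb a1 o s')
        ≤ π1 a1 * (G.rmax + G.γ * C) := by
      intro a1 _
      refine mul_le_mul_of_nonneg_left ?_ (hπ1.1 a1)
      have hR : G.R s a1 a20 ≤ G.rmax :=
        Finset.le_sup' (fun x : S × A1 × A2 => G.R x.1 x.2.1 x.2.2) (Finset.mem_univ (s, a1, a20))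
      have hT : (∑ o, ∑ s', G.T s a1 a20 o s' * αb a1 o s') ≤ C := by
        calc (∑ o, ∑ s', G.T s a1 a20 o s' * αb a1 o s')
            ≤ ∑ o, ∑ s', G.T s a1 a20 o s' * C := by
              refine Finset.sum_le_sum fun o _ => Finset.sum_le_sum fun s' _ => ?_
              exact mul_le_mul_of_nonneg_left (hCb a1 o s') (G.T_nonneg s a1 a20 o s')
          _ = (∑ o, ∑ s', G.T s a1 a20 o s') * C := by
              rw [Finset.sum_mul]
              exact Finset.sum_congr rfl fun o _ => (Finset.sum_mul _ _ _).symm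
          _ = C := by rw [G.T_sum, one_mul]
      have := mul_le_mul_of_nonneg_left hT G.γ_pos.le
      linarith
    calc (∑ a1, π1 a1 * (G.R s a1 a20 + G.γ * ∑ o, ∑ s', G.T s a1 a20 o s' * αb a1 o s'))
        ≤ ∑ a1, π1 a1 * (G.rmax + G.γ * C) := Finset.sum_le_sum hterm
      _ = (∑ a1, π1 a1) * (G.rmax + G.γ * C) := (Finset.sum_mul _ _ _).symm
      _ = G.rmax + G.γ * C := by rw [hπ1.2, one_mul]
  calc G.valcomp π1 αb b
      ≤ ∑ s, b s * (G.rmax + G.γ * C) := by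
        refine Finset.sum_le_sum fun s _ => mul_le_mul_of_nonneg_left ?_ (hb.1 s)
        rw [valcompVert_eq]
        exact (Finset.inf'_le _ (Finset.mem_univ a20)).trans (hg s)
    _ = G.rmax + G.γ * C := by rw [← Finset.sum_mul, hb.2, one_mul]

lemma exists_pi2_le (hb : b ∈ stdSimplex ℝ S) (hπ1 : π1 ∈ stdSimplex ℝ A1)
    {Γ : Set (S → ℝ)} (hne : Γ.Nonempty) (hΓconv : Convex ℝ Γ)
    (hbdd : ∀ β ∈ stdSimplex ℝ S, BddAbove ((fun α => lineval α β) '' Γ))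
    {V : (S → ℝ) → ℝ} (hV : ∀ β ∈ stdSimplex ℝ S, V β = sSup ((fun α => lineval α β) '' Γ))
    (c : ℝ)
    (hcge : ∀ αb : A1 → O → S → ℝ, (∀ a1 o, αb a1 o ∈ Γ) → G.valcomp π1 αb b ≤ c) :
    ∃ π2 ∈ Pi2 S A2, G.stageU V b π1 π2 ≤ c := by
  classical
  set Y : Set (A1 → O → S → ℝ) := {αb | ∀ a1 o, αb a1 o ∈ Γ} with hY
  obtain ⟨α0, hα0⟩ := hne
  have hYne : Y.Nonempty := ⟨fun _ _ => α0, fun _ _ => hα0⟩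
  have hYconv : Convex ℝ Y := by
    rintro x hx y hy a c' ha hc' hac'
    intro a1 o
    have := hΓconv (hx a1 o) (hy a1 o) ha hc' hac'
    simpa using this
  set ψ : (S → A2) → (A1 → O → S → ℝ) → ℝ :=
    fun d αb => ∑ s, b s * G.gfun π1 αb s (d s) with hψdef
  have hψ : ∀ d, ∀ x ∈ Y, ∀ y ∈ Y, ∀ a c' : ℝ, 0 ≤ a → 0 ≤ c' → a + c' = 1 →
      ψ d (a • x + c' • y) = a * ψ d x + c' * ψ d y := by
    intro d x _ y _ a c' _ _ hac'
    simp only [hψdef]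
    rw [Finset.mul_sum, Finset.mul_sum, ← Finset.sum_add_distrib]
    refine Finset.sum_congr rfl fun s _ => ?_
    rw [gfun_affine x y hac']
    ring
  have hc : ∀ αb ∈ Y, ∃ d, ψ d αb ≤ c := by
    intro αb hαb
    have hex : ∀ s : S, ∃ a2, a2 ∈ Finset.univ ∧
        Finset.univ.inf' Finset.univ_nonempty (G.gfun π1 αb s) = G.gfun π1 αb s a2 :=
      fun s => Finset.exists_mem_eq_inf' Finset.univ_nonempty (G.gfun π1 αb s)
    choose d _ hd2 using hex
    refine ⟨d, ?_⟩
    have heq : ψ d αb = G.valcomp π1 αb b := by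
      simp only [hψdef]
      unfold valcomp
      refine Finset.sum_congr rfl fun s _ => ?_
      rw [valcompVert_eq, hd2 s]
    rw [heq]
    exact hcge αb hαb
  obtain ⟨lam, hlam, hlamle⟩ := minimax_sep Y hYne hYconv ψ hψ c hc
  set π2 : S → A2 → ℝ := fun s a2 => ∑ d ∈ Finset.univ.filter (fun d => d s = a2), lam d
    with hπ2def
  have hπ2mem : π2 ∈ Pi2 S A2 := by
    intro s
    constructor
    · intro a2
      exact Finset.sum_nonneg fun d _ => hlam.1 d
    · simp only [hπ2def]
      rw [Finset.sum_fiberwise_eq_sum_filter Finset.univ Finset.univ (fun d => d s) lam]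
      simpa using hlam.2
  refine ⟨π2, hπ2mem, ?_⟩
  have hkey : ∀ αb : A1 → O → S → ℝ,
      (∑ s, b s * ∑ a2, π2 s a2 * G.gfun π1 αb s a2) = ∑ d, lam d * ψ d αb := by
    intro αb
    have hs : ∀ s, b s * ∑ a2, π2 s a2 * G.gfun π1 αb s a2
        = ∑ d, lam d * (b s * G.gfun π1 αb s (d s)) := by
      intro s
      have h1 : (∑ a2, π2 s a2 * G.gfun π1 αb s a2)
          = ∑ d, lam d * G.gfun π1 αb s (d s) := by
        calc (∑ a2, π2 s a2 * G.gfun π1 αb s a2)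
            = ∑ a2, ∑ d ∈ Finset.univ.filter (fun d => d s = a2),
                lam d * G.gfun π1 αb s (d s) := by
              refine Finset.sum_congr rfl fun a2 _ => ?_
              rw [hπ2def]
              rw [Finset.sum_mul]
              refine Finset.sum_congr rfl fun d hd => ?_
              rw [(Finset.mem_filter.1 hd).2]
          _ = ∑ d, lam d * G.gfun π1 αb s (d s) := by
              rw [Finset.sum_fiberwise_eq_sum_filter Finset.univ Finset.univ (fun d => d s)
                (fun d => lam d * G.gfun π1 αb s (d s))]
              simp
      rw [h1, Finset.mul_sum]
      exact Finset.sum_congr rfl fun d _ => by ring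
    calc (∑ s, b s * ∑ a2, π2 s a2 * G.gfun π1 αb s a2)
        = ∑ s, ∑ d, lam d * (b s * G.gfun π1 αb s (d s)) :=
          Finset.sum_congr rfl fun s _ => hs s
      _ = ∑ d, ∑ s, lam d * (b s * G.gfun π1 αb s (d s)) := Finset.sum_comm
      _ = ∑ d, lam d * ψ d αb := by
          refine Finset.sum_congr rfl fun d _ => ?_
          rw [hψdef, Finset.mul_sum]
  have hmain : ∀ ε : ℝ, 0 < ε → G.stageU V b π1 π2 ≤ c + G.γ * ε := by
    intro ε hε
    set n : ℝ := (Fintype.card A1 : ℝ) * (Fintype.card O : ℝ) with hn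
    have hnpos : 0 < n := by
      have h1 : 0 < (Fintype.card A1 : ℝ) := by
        exact_mod_cast Fintype.card_pos
      have h2 : 0 < (Fintype.card O : ℝ) := by
        exact_mod_cast Fintype.card_pos
      exact mul_pos h1 h2
    have hchoice : ∀ a1 o, ∃ α, α ∈ Γ ∧
        G.Pr b π1 π2 a1 o * V (G.beliefUpd b a1 π2 o)
          ≤ π1 a1 * G.Xfun b π2 a1 o α + ε / n := by
      intro a1 o
      obtain ⟨α, hα, hle⟩ := lemQ (G := G) (a1 := a1) (o := o) hb hπ1 hπ2mem ⟨α0, hα0⟩ hV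
        (div_pos hε hnpos)
      exact ⟨α, hα, hle⟩
    choose αs hαsΓ hαsle using hchoice
    have hsum : (∑ a1, ∑ o, G.Pr b π1 π2 a1 o * V (G.beliefUpd b a1 π2 o))
        ≤ (∑ a1, ∑ o, π1 a1 * G.Xfun b π2 a1 o (αs a1 o)) + ε := by
      calc (∑ a1, ∑ o, G.Pr b π1 π2 a1 o * V (G.beliefUpd b a1 π2 o))
          ≤ ∑ a1, ∑ o, (π1 a1 * G.Xfun b π2 a1 o (αs a1 o) + ε / n) :=
            Finset.sum_le_sum fun a1 _ => Finset.sum_le_sum fun o _ => hαsle a1 o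
        _ = (∑ a1, ∑ o, π1 a1 * G.Xfun b π2 a1 o (αs a1 o)) + ε := by
            simp only [Finset.sum_add_distrib]
            congr 1
            rw [Finset.sum_const, Finset.sum_const, Finset.card_univ, Finset.card_univ,
              nsmul_eq_mul, nsmul_eq_mul, hn]
            field_simp
    have hstage : G.stageU V b π1 π2
        ≤ (∑ s, b s * ∑ a2, π2 s a2 * G.gfun π1 αs s a2) + G.γ * ε := by
      unfold stageU
      rw [Phi_eq]
      have := mul_le_mul_of_nonneg_left hsum G.γ_pos.le
      have h2 : G.γ * ((∑ a1, ∑ o, π1 a1 * G.Xfun b π2 a1 o (αs a1 o)) + ε)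
          = G.γ * (∑ a1, ∑ o, π1 a1 * G.Xfun b π2 a1 o (αs a1 o)) + G.γ * ε := by ring
      linarith
    have hfin : (∑ s, b s * ∑ a2, π2 s a2 * G.gfun π1 αs s a2) ≤ c := by
      rw [hkey αs]
      exact hlamle αs (fun a1 o => hαsΓ a1 o)
    linarith
  refine le_of_forall_sub_le fun ε hε => ?_
  have := hmain (ε / G.γ) (div_pos hε G.γ_pos)
  rw [mul_div_cancel₀ _ (ne_of_gt G.γ_pos)] at this
  linarith


end OSPOSG

namespace OSPOSG

variable {S A1 A2 O : Type*} [Fintype S] [Fintype A1] [Fintype A2] [Fintype O]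
  [Nonempty S] [Nonempty A1] [Nonempty A2] [Nonempty O]

/-- The max-composition form of the Bellman operator coincides with its maximin form:
`sup_{π1} sup_{ᾱ ∈ Γ^{A1×O}} valcomp(π1,ᾱ)(b) = sup_{π1} inf_{π2} u^{V,b}(π1,π2)`. -/
theorem maxComposition_eq_maximin (G : OSPOSG S A1 A2 O)
    (Γ : Set (S → ℝ)) (hne : Γ.Nonempty) (hΓconv : Convex ℝ Γ)
    (hbdd : ∀ b ∈ stdSimplex ℝ S, BddAbove ((fun α => lineval α b) '' Γ))
    (V : (S → ℝ) → ℝ)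
    (hV : ∀ b ∈ stdSimplex ℝ S, V b = sSup ((fun α => lineval α b) '' Γ))
    (b : S → ℝ) (hb : b ∈ stdSimplex ℝ S) :
    sSup {y : ℝ | ∃ π1 ∈ stdSimplex ℝ A1, ∃ αb : A1 → O → S → ℝ,
        (∀ a1 o, αb a1 o ∈ Γ) ∧ y = G.valcomp π1 αb b} =
      ⨆ π1 : stdSimplex ℝ A1, ⨅ π2 : Pi2 S A2, G.stageU V b π1.1 π2.1 := by
  classical
  obtain ⟨α0, hα0⟩ := hne
  obtain ⟨Cb, hCb⟩ := alpha_bound hbdd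
  set 𝒮 : Set ℝ := {y : ℝ | ∃ π1 ∈ stdSimplex ℝ A1, ∃ αb : A1 → O → S → ℝ,
      (∀ a1 o, αb a1 o ∈ Γ) ∧ y = G.valcomp π1 αb b} with h𝒮
  have hKb : ∀ y ∈ 𝒮, y ≤ G.rmax + G.γ * max Cb 0 := by
    rintro y ⟨π1, hπ1, αb, hαb, rfl⟩
    exact valcomp_bound hb hπ1 (fun a1 o s' => (hCb _ (hαb a1 o) s').trans (le_max_left _ _))
  have hSbdd : BddAbove 𝒮 := ⟨_, hKb⟩
  have hπ1u : (fun _ : A1 => (Fintype.card A1 : ℝ)⁻¹) ∈ stdSimplex ℝ A1 := by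
    constructor
    · intro a1
      positivity
    · rw [Finset.sum_const, Finset.card_univ, nsmul_eq_mul]
      rw [mul_inv_cancel₀]
      exact_mod_cast Fintype.card_ne_zero
  have hπ2u : (fun (_ : S) (_ : A2) => (Fintype.card A2 : ℝ)⁻¹) ∈ Pi2 S A2 := by
    intro s
    constructor
    · intro a2
      positivity
    · rw [Finset.sum_const, Finset.card_univ, nsmul_eq_mul]
      rw [mul_inv_cancel₀]
      exact_mod_cast Fintype.card_ne_zero
  have hSne : 𝒮.Nonempty :=
    ⟨G.valcomp (fun _ : A1 => (Fintype.card A1 : ℝ)⁻¹) (fun _ _ => α0) b,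
      ⟨_, hπ1u, fun _ _ => α0, fun _ _ => hα0, rfl⟩⟩
  haveI hne2 : Nonempty ↥(Pi2 S A2) := ⟨⟨_, hπ2u⟩⟩
  haveI hne1 : Nonempty ↥(stdSimplex ℝ A1) := ⟨⟨_, hπ1u⟩⟩
  set c : ℝ := sSup 𝒮 with hc
  have hbdd2 : ∀ π1 : A1 → ℝ, π1 ∈ stdSimplex ℝ A1 →
      BddBelow (Set.range fun π2 : ↥(Pi2 S A2) => G.stageU V b π1 π2.1) := by
    intro π1 hπ1
    refine ⟨G.valcomp π1 (fun _ _ => α0) b, ?_⟩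
    rintro y ⟨π2, rfl⟩
    exact valcomp_le_stageU hb hπ1 π2.2 hbdd hV (fun _ _ => hα0)
  have hF : ∀ π1 : ↥(stdSimplex ℝ A1), (⨅ π2 : ↥(Pi2 S A2), G.stageU V b π1.1 π2.1) ≤ c := by
    intro π1
    obtain ⟨π2, hπ2, hle⟩ := exists_pi2_le hb π1.2 ⟨α0, hα0⟩ hΓconv hbdd hV c
      (fun αb hαb => le_csSup hSbdd ⟨π1.1, π1.2, αb, hαb, rfl⟩)
    exact (ciInf_le (hbdd2 π1.1 π1.2) ⟨π2, hπ2⟩).trans hle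
  refine le_antisymm ?_ (ciSup_le fun π1 => hF π1)
  refine csSup_le hSne ?_
  rintro y ⟨π1, hπ1, αb, hαb, rfl⟩
  have h1 : G.valcomp π1 αb b ≤ ⨅ π2 : ↥(Pi2 S A2), G.stageU V b π1 π2.1 :=
    le_ciInf fun π2 => valcomp_le_stageU hb hπ1 π2.2 hbdd hV hαb
  refine h1.trans ?_
  exact le_ciSup (f := fun π1 : ↥(stdSimplex ℝ A1) => ⨅ π2 : ↥(Pi2 S A2), G.stageU V b π1.1 π2.1)
    ⟨c, by rintro _ ⟨π1', rfl⟩; exact hF π1'⟩ ⟨π1, hπ1⟩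


end OSPOSG
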